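/- Let (I, ≤) be a directed preorder and (X_i, f_{ji}) a regular directed system of topological spaces over (I, ≤). If every X_i is a T₀ (Kolmogorov) space, then the direct limit X_∞ is a T₀ space. -/

import Mathlib

universe u v

/-- A directed system of topological spaces over a preorder `I`:
spaces `X i` with continuous transition maps `map i j : X i → X j` for `i ≤ j`,
satisfying the identity and composition laws. -/
structure TopDirectedSystem (I : Type u) [Preorder I] : Type (max u (v + 1)) where
  X : I → Type v
  top : ∀ i, TopologicalSpace (X i)
  map : ∀ i j, i ≤ j → X i → X j
  map_continuous : ∀ i j (h : i ≤ j), Continuous (map i j h)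
  map_id : ∀ i (x : X i), map i i le_rfl x = x
  map_comp : ∀ i j k (hij : i ≤ j) (hjk : j ≤ k) (x : X i),
    map j k hjk (map i j hij x) = map i k (hij.trans hjk) x

attribute [instance] TopDirectedSystem.top

namespace TopDirectedSystem

variable {I : Type u} [Preorder I] (S : TopDirectedSystem.{u, v} I)

/-- The relation on the disjoint union: `⟨i, x⟩ ∼ ⟨j, y⟩` iff there is `k ≥ i, j`
with `f_{ki} x = f_{kj} y`. -/
def Rel (p q : Σ i, S.X i) : Prop :=
  ∃ (k : I) (hik : p.1 ≤ k) (hjk : q.1 ≤ k), S.map p.1 k hik p.2 = S.map q.1 k hjk q.2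

/-- The direct limit: the quotient of the disjoint union (with the disjoint union
topology) by `Rel`, carrying the quotient topology. -/
def Limit : Type (max u v) := Quot S.Rel

instance : TopologicalSpace S.Limit :=
  inferInstanceAs (TopologicalSpace (Quot S.Rel))

/-- The canonical map `f_{*i} : X i → X_∞`. -/
def ι (i : I) (x : S.X i) : S.Limit :=
  Quot.mk S.Rel ⟨i, x⟩

/-- A directed system is regular if all transition maps are injective
(continuous) open maps. -/
def Regular : Prop :=
  ∀ i j (h : i ≤ j), Function.Injective (S.map i j h) ∧ IsOpenMap (S.map i j h)

end TopDirectedSystem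


section Aux

namespace TopDirectedSystem

variable {I : Type u} [Preorder I] [IsDirected I (· ≤ ·)] (S : TopDirectedSystem.{u, v} I)

lemma rel_equivalence : Equivalence S.Rel := by
  constructor
  · intro p; exact ⟨p.1, le_rfl, le_rfl, rfl⟩
  · rintro p q ⟨k, h1, h2, e⟩; exact ⟨k, h2, h1, e.symm⟩
  · rintro p q r ⟨k, hpk, hqk, e1⟩ ⟨m, hqm, hrm, e2⟩
    obtain ⟨n, hkn, hmn⟩ := directed_of (· ≤ ·) k m
    refine ⟨n, hpk.trans hkn, hrm.trans hmn, ?_⟩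
    have : S.map k n hkn (S.map p.1 k hpk p.2) = S.map m n hmn (S.map r.1 m hrm r.2) := by
      rw [e1, ← e2, S.map_comp, S.map_comp]
    rwa [S.map_comp, S.map_comp] at this

lemma quot_mk_eq_iff {p q : Σ i, S.X i} :
    Quot.mk S.Rel p = Quot.mk S.Rel q ↔ S.Rel p q := by
  rw [Quot.eq]
  exact (Equivalence.eqvGen_iff S.rel_equivalence)

lemma ι_continuous (i : I) : Continuous (S.ι i) :=
  (continuous_quot_mk).comp continuous_sigmaMk

lemma ι_injective (hreg : S.Regular) (i : I) : Function.Injective (S.ι i) := by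
  intro a b hab
  obtain ⟨k, h1, h2, e⟩ := (S.quot_mk_eq_iff).mp hab
  exact (hreg i k h1).1 (by simpa using e)

lemma ι_isOpenMap (hreg : S.Regular) (i : I) : IsOpenMap (S.ι i) := by
  intro U hU
  change IsOpen (Quot.mk S.Rel ⁻¹' (S.ι i '' U))
  rw [isOpen_sigma_iff]
  intro j
  have key : (Sigma.mk j ⁻¹' (Quot.mk S.Rel ⁻¹' (S.ι i '' U)))
      = ⋃ (m : I) (hjm : j ≤ m) (him : i ≤ m),
        S.map j m hjm ⁻¹' (S.map i m him '' U) := by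
    ext y
    simp only [Set.mem_preimage, Set.mem_image, Set.mem_iUnion]
    constructor
    · rintro ⟨u, hu, he⟩
      obtain ⟨m, him, hjm, e⟩ := (S.quot_mk_eq_iff).mp he
      exact ⟨m, hjm, him, u, hu, e⟩
    · rintro ⟨m, hjm, him, u, hu, e⟩
      exact ⟨u, hu, (S.quot_mk_eq_iff).mpr ⟨m, him, hjm, e⟩⟩
    
  rw [key]
  refine isOpen_iUnion fun m => isOpen_iUnion fun hjm => isOpen_iUnion fun him => ?_
  exact (S.map_continuous j m hjm).isOpen_preimage _ ((hreg i m him).2 U hU)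

lemma ι_inseparable (hreg : S.Regular) (i : I) [T0Space (S.X i)] {a b : S.X i}
    (hab : Inseparable (S.ι i a) (S.ι i b)) : a = b := by
  have hi : Inseparable a b := by
    rw [inseparable_iff_forall_isOpen] at hab ⊢
    intro U hU
    have := hab (S.ι i '' U) (S.ι_isOpenMap hreg i U hU)
    constructor
    · intro ha
      obtain ⟨u, hu, he⟩ := this.mp ⟨a, ha, rfl⟩
      rwa [← S.ι_injective hreg i he]
    · intro hb
      obtain ⟨u, hu, he⟩ := this.mpr ⟨b, hb, rfl⟩
      rwa [← S.ι_injective hreg i he]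
  exact hi.eq

lemma ι_map (i k : I) (hik : i ≤ k) (x : S.X i) :
    S.ι k (S.map i k hik x) = S.ι i x :=
  Quot.sound ⟨k, le_rfl, hik, by simp [S.map_id]⟩

end TopDirectedSystem

end Aux

/-- the direct limit of a regular directed system of T0Space
topological spaces is a T0Space. -/
theorem limit_t0 {I : Type u} [Preorder I] [Nonempty I] [IsDirected I (· ≤ ·)]
    (S : TopDirectedSystem.{u, v} I) (hreg : S.Regular) (h : ∀ i, T0Space (S.X i)) :
    T0Space S.Limit := by
  rw [t0Space_iff_inseparable]
  rintro ⟨⟨i, x⟩⟩ ⟨⟨j, y⟩⟩ hsep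
  obtain ⟨k, hik, hjk⟩ := directed_of (· ≤ ·) i j
  rw [show (Quot.mk S.Rel ⟨i, x⟩ : S.Limit) = S.ι k (S.map i k hik x) from (S.ι_map i k hik x).symm,
      show (Quot.mk S.Rel ⟨j, y⟩ : S.Limit) = S.ι k (S.map j k hjk y) from (S.ι_map j k hjk y).symm] at hsep ⊢
  rw [S.ι_inseparable hreg k hsep]
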